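/- Fix b > 0, natural numbers N_1, N_2, n with n ≤ min(N_1, N_2), and γ_1, γ_2 ∈ ℝ with γ_1 − γ_2 > N_2 and γ_1 − γ_2 not an integer. Define W_1(m) = (−b)^m / (m! · (N_1 − m)! · Γ(m + γ_1 − γ_2 + 1) · Γ(N_2 − m − γ_1 + γ_2 + 1)) for 0 ≤ m ≤ N_1, W_2(m) = (−b)^m / (Γ(m + γ_2 − γ_1 + 1) · Γ(N_1 − m + γ_1 − γ_2 + 1) · m! · (N_2 − m)!) for 0 ≤ m ≤ N_2, and P : ℝ → ℝ by P(x) = Σ_{j=0}^{n} (−1)^j C(n,j) (−b)^(−j) · Π_{i=0}^{j−1} [(x − γ_1 − i)(x − γ_2 − i)] · Π_{i=0}^{n−j−1} [(N_1 − x + γ_1 − i)(N_2 − x + γ_2 − i)]. Then: (i) for each j ∈ {1,2}, W_j(m)·W_j(m') > 0 for all 0 ≤ m, m' ≤ N_j; (ii) P is the evaluation of a real polynomial of degree exactly 2n; (iii) for every j ∈ {1,2} and every natural number k < n, Σ_{m=0}^{N_j} P(γ_j + m)(γ_j + m)^k W_j(m) = 0. -/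

import Mathlib

lemma invG (x : ℝ) : (Real.Gamma x)⁻¹ = x * (Real.Gamma (x+1))⁻¹ := by
  rcases eq_or_ne x 0 with rfl | hx
  · simp [Real.Gamma_zero]
  rcases eq_or_ne (Real.Gamma x) 0 with h0 | h0
  · rw [h0]
    rw [Real.Gamma_eq_zero_iff] at h0
    obtain ⟨m, rfl⟩ := h0
    have : ((-m : ℝ)) + 1 = -(m-1 : ℤ) := by push_cast; ring
    rw [this]
    rcases Nat.eq_zero_or_pos m with rfl | hm
    · simp at hx
    have : Real.Gamma (-((m : ℤ) - 1 : ℤ) : ℝ) = 0 := by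
      rw [Real.Gamma_eq_zero_iff]
      exact ⟨m - 1, by push_cast [Nat.cast_sub hm]; ring⟩
    rw [this]; simp
  · have h1 : Real.Gamma (x + 1) = x * Real.Gamma x := Real.Gamma_add_one hx
    rw [h1, mul_inv]
    field_simp

lemma prodG (y : ℝ) (p : ℕ) :
    (∏ i ∈ Finset.range p, (y - i)) * (Real.Gamma (y+1))⁻¹ = (Real.Gamma (y - p + 1))⁻¹ := by
  induction p with
  | zero => simp
  | succ p ih =>
    rw [Finset.prod_range_succ, mul_comm _ (y - p), mul_assoc, ih]
    have : (Real.Gamma (y - p))⁻¹ = (y - p) * (Real.Gamma (y - p + 1))⁻¹ := invG _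
    have h2 : y - (p+1 : ℕ) + 1 = y - p := by push_cast; ring
    rw [h2, this]

lemma gammaNZ (a : ℝ) (hz : ∀ z : ℤ, a ≠ z) : Real.Gamma a ≠ 0 := by
  apply Real.Gamma_ne_zero
  intro k
  have := hz (-(k:ℤ))
  push_cast at this
  exact this

lemma gammaSign (a : ℝ) (ha : a < 1) (hz : ∀ z : ℤ, a ≠ z) (m : ℕ) :
    0 < (-1:ℝ)^m * (Real.Gamma (a - m) * Real.Gamma a) := by
  induction m with
  | zero =>
    have h0 : Real.Gamma a ≠ 0 := gammaNZ a hz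
    simpa using mul_self_pos.mpr h0
  | succ m ih =>
    have hne : a - m - 1 ≠ 0 := by
      have := hz (m + 1)
      intro h
      apply this
      push_cast
      linarith
    have hrec : Real.Gamma (a - m) = (a - m - 1) * Real.Gamma (a - m - 1) := by
      have := Real.Gamma_add_one hne
      rw [show a - m - 1 + 1 = a - m by ring] at this
      rw [this]
    have hcast : a - ((m:ℕ)+1 : ℕ) = a - m - 1 := by push_cast; ring
    rw [hcast] at *
    have hGne : Real.Gamma (a - m - 1) ≠ 0 := by
      apply gammaNZ
      intro z
      have := hz (z + m + 1)
      intro h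
      apply this
      push_cast
      linarith
    have hneg : a - m - 1 < 0 := by
      have : (0:ℝ) ≤ m := Nat.cast_nonneg m
      linarith
    rw [hrec] at ih
    have key : 0 < (-1:ℝ)^(m+1) * (Real.Gamma (a - m - 1) * Real.Gamma a) := by
      rcases mul_pos_iff.mp ih with ⟨h1, h2⟩ | ⟨h1, h2⟩
      · have : Real.Gamma (a-m-1) * Real.Gamma a < 0 := by
          nlinarith
        have hpm : (-1:ℝ)^(m+1) = -(-1:ℝ)^m := by ring
        rw [hpm]
        nlinarith
      · have : 0 < Real.Gamma (a-m-1) * Real.Gamma a := by nlinarith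
        have hpm : (-1:ℝ)^(m+1) = -(-1:ℝ)^m := by ring
        rw [hpm]
        nlinarith
    simpa using key

lemma altSplit (f : ℕ → ℝ) (n : ℕ) :
    ∑ j ∈ Finset.range (n+2), (-1:ℝ)^j * ((n+1).choose j) * f j
      = ∑ j ∈ Finset.range (n+1), (-1:ℝ)^j * (n.choose j) * (f j - f (j+1)) := by
  rw [Finset.sum_range_succ' (fun j => (-1:ℝ)^j * ((n+1).choose j) * f j)]
  have hsplit : ∀ i, (-1:ℝ)^(i+1) * ((n+1).choose (i+1)) * f (i+1)
      = (-1:ℝ)^(i+1) * (n.choose i) * f (i+1) + (-1:ℝ)^(i+1) * (n.choose (i+1)) * f (i+1) := by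
    intro i
    rw [Nat.choose_succ_succ]
    push_cast
    ring
  rw [Finset.sum_congr rfl (fun i _ => hsplit i), Finset.sum_add_distrib]
  have h1 : ∑ i ∈ Finset.range (n+1), (-1:ℝ)^(i+1) * (n.choose (i+1)) * f (i+1) + (-1:ℝ)^0 * ((n+1).choose 0) * f 0
      = ∑ j ∈ Finset.range (n+1), (-1:ℝ)^j * (n.choose j) * f j := by
    rw [Finset.sum_range_succ' (fun j => (-1:ℝ)^j * (n.choose j) * f j)]
    rw [Finset.sum_range_succ]
    simp
  have h2 : ∑ i ∈ Finset.range (n+1), (-1:ℝ)^(i+1) * (n.choose i) * f (i+1)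
      = -∑ j ∈ Finset.range (n+1), (-1:ℝ)^j * (n.choose j) * f (j+1) := by
    rw [← Finset.sum_neg_distrib]
    congr 1; funext i; ring
  rw [add_assoc, h1, h2]
  have h3 : ∑ j ∈ Finset.range (n+1), (-1:ℝ)^j * (n.choose j) * (f j - f (j+1))
      = ∑ j ∈ Finset.range (n+1), (-1:ℝ)^j * (n.choose j) * f j
        - ∑ j ∈ Finset.range (n+1), (-1:ℝ)^j * (n.choose j) * f (j+1) := by
    rw [← Finset.sum_sub_distrib]
    congr 1; funext j; ring
  rw [h3]; ring

lemma diffPow : ∀ n k : ℕ, k < n → ∀ x : ℝ,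
    ∑ j ∈ Finset.range (n+1), (-1:ℝ)^j * (n.choose j) * (x + j)^k = 0 := by
  intro n
  induction n with
  | zero => intro k hk; omega
  | succ n ih =>
    intro k hk x
    rw [show n + 1 + 1 = n + 2 from rfl, altSplit (fun j => (x + j)^k) n]
    have hterm : ∀ j : ℕ, (x + (j:ℝ))^k - (x + ((j:ℕ)+1:ℕ))^k
        = -∑ t ∈ Finset.range k, (k.choose t) * (x + j)^t := by
      intro j
      have hb : (x + (j:ℝ) + 1)^k = ∑ t ∈ Finset.range (k+1), (x + j)^t * (k.choose t) := by
        have := add_pow (x + (j:ℝ)) 1 k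
        simpa using this
      push_cast
      rw [show x + ((j:ℝ)+1) = x + j + 1 by ring, hb, Finset.sum_range_succ]
      simp
      exact Finset.sum_congr rfl fun t _ => mul_comm _ _
    calc ∑ j ∈ Finset.range (n+1), (-1:ℝ)^j * (n.choose j) * ((x + j)^k - (x + (j+1:ℕ))^k)
        = ∑ j ∈ Finset.range (n+1), (-1:ℝ)^j * (n.choose j) * (-∑ t ∈ Finset.range k, (k.choose t) * (x + j)^t) := by
          exact Finset.sum_congr rfl (fun j _ => by rw [hterm j])
      _ = -∑ t ∈ Finset.range k, (k.choose t) * ∑ j ∈ Finset.range (n+1), (-1:ℝ)^j * (n.choose j) * (x + j)^t := by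
          simp only [mul_neg, Finset.mul_sum, Finset.sum_neg_distrib, neg_inj]
          rw [Finset.sum_comm]
          exact Finset.sum_congr rfl fun t _ => Finset.sum_congr rfl fun j _ => by ring
      _ = 0 := by
          have : ∀ t ∈ Finset.range k, (k.choose t : ℝ) * ∑ j ∈ Finset.range (n+1), (-1:ℝ)^j * (n.choose j) * (x + j)^t = 0 := by
            intro t ht
            have ht' := Finset.mem_range.mp ht
            rw [ih t (by omega) x, mul_zero]
          rw [Finset.sum_congr rfl this]
          simp

lemma swapLem (F : ℤ → ℝ) (q : ℕ → ℝ) (Na n : ℕ) (hn : n ≤ Na)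
    (h0 : ∀ ℓ : ℤ, ℓ < 0 → F ℓ = 0) (h1 : ∀ ℓ : ℤ, (Na:ℤ) - (n:ℤ) < ℓ → F ℓ = 0)
    (hq : ∀ ℓ : ℕ, ∑ j ∈ Finset.range (n+1), (-1:ℝ)^j * (n.choose j) * q (ℓ+j) = 0) :
    ∑ m ∈ Finset.range (Na+1), q m * ∑ j ∈ Finset.range (n+1), (-1:ℝ)^j * (n.choose j) * F ((m:ℤ) - j) = 0 := by
  have key : ∀ j, j ≤ n → ∑ m ∈ Finset.range (Na+1), q m * F ((m:ℤ) - j)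
      = ∑ ℓ ∈ Finset.range (Na - n + 1), q (ℓ + j) * F ℓ := by
    intro j hj
    have hsub : Finset.Ico j (Na - n + j + 1) ⊆ Finset.range (Na+1) := by
      intro m hm
      rw [Finset.mem_Ico] at hm
      rw [Finset.mem_range]
      omega
    rw [← Finset.sum_subset hsub]
    · rw [Finset.sum_Ico_eq_sum_range]
      apply Finset.sum_congr
      · congr 1; omega
      · intro ℓ hℓ
        congr 2
        · omega
        · push_cast; ring
    · intro m hm hnot
      rw [Finset.mem_Ico] at hnot
      push_neg at hnot
      rcases lt_or_ge m j with h | h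
      · rw [h0 ((m:ℤ) - j) (by omega), mul_zero]
      · rw [h1 ((m:ℤ) - j) (by omega), mul_zero]
  calc ∑ m ∈ Finset.range (Na+1), q m * ∑ j ∈ Finset.range (n+1), (-1:ℝ)^j * (n.choose j) * F ((m:ℤ) - j)
      = ∑ j ∈ Finset.range (n+1), (-1:ℝ)^j * (n.choose j) * ∑ m ∈ Finset.range (Na+1), q m * F ((m:ℤ) - j) := by
        simp only [Finset.mul_sum]
        rw [Finset.sum_comm]
        exact Finset.sum_congr rfl fun m _ => Finset.sum_congr rfl fun j _ => by ring
    _ = ∑ j ∈ Finset.range (n+1), (-1:ℝ)^j * (n.choose j) * ∑ ℓ ∈ Finset.range (Na - n + 1), q (ℓ + j) * F ℓ := by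
        refine Finset.sum_congr rfl fun j hj => ?_
        have := Finset.mem_range.mp hj
        rw [key j (by omega)]
    _ = ∑ ℓ ∈ Finset.range (Na - n + 1), F ℓ * ∑ j ∈ Finset.range (n+1), (-1:ℝ)^j * (n.choose j) * q (ℓ + j) := by
        simp only [Finset.mul_sum]
        rw [Finset.sum_comm]
        exact Finset.sum_congr rfl fun j _ => Finset.sum_congr rfl fun ℓ _ => by ring
    _ = 0 := by
        refine Finset.sum_eq_zero fun ℓ _ => ?_
        rw [hq ℓ, mul_zero]

lemma termEq (b u v w z : ℝ) (hb : b ≠ 0) (j p m : ℕ) :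
    (∏ i ∈ Finset.range j, ((u - i) * (v - i))) * (∏ i ∈ Finset.range p, ((w - i) * (z - i))) *
      ((-b)^m * (-b)^(-(j:ℤ)) * ((Real.Gamma (u+1))⁻¹ * (Real.Gamma (v+1))⁻¹ *
        (Real.Gamma (w+1))⁻¹ * (Real.Gamma (z+1))⁻¹))
    = (-b)^((m:ℤ)-j) * ((Real.Gamma (u-j+1))⁻¹ * (Real.Gamma (v-j+1))⁻¹ *
        (Real.Gamma (w-p+1))⁻¹ * (Real.Gamma (z-p+1))⁻¹) := by
  have hb' : (-b) ≠ 0 := neg_ne_zero.mpr hb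
  have hpow : (-b)^m * (-b)^(-(j:ℤ)) = (-b)^((m:ℤ)-j) := by
    rw [← zpow_natCast (-b) m, ← zpow_add₀ hb', sub_eq_add_neg]
  rw [Finset.prod_mul_distrib, Finset.prod_mul_distrib]
  calc (∏ i ∈ Finset.range j, (u - i)) * (∏ i ∈ Finset.range j, (v - i)) *
        ((∏ i ∈ Finset.range p, (w - i)) * (∏ i ∈ Finset.range p, (z - i))) *
        ((-b)^m * (-b)^(-(j:ℤ)) * ((Real.Gamma (u+1))⁻¹ * (Real.Gamma (v+1))⁻¹ *
          (Real.Gamma (w+1))⁻¹ * (Real.Gamma (z+1))⁻¹))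
      = ((-b)^m * (-b)^(-(j:ℤ))) *
        (((∏ i ∈ Finset.range j, (u - i)) * (Real.Gamma (u+1))⁻¹) *
         ((∏ i ∈ Finset.range j, (v - i)) * (Real.Gamma (v+1))⁻¹) *
         ((∏ i ∈ Finset.range p, (w - i)) * (Real.Gamma (w+1))⁻¹) *
         ((∏ i ∈ Finset.range p, (z - i)) * (Real.Gamma (z+1))⁻¹)) := by ring
    _ = (-b)^((m:ℤ)-j) * ((Real.Gamma (u-j+1))⁻¹ * (Real.Gamma (v-j+1))⁻¹ *
        (Real.Gamma (w-p+1))⁻¹ * (Real.Gamma (z-p+1))⁻¹) := by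
        rw [prodG u j, prodG v j, prodG w p, prodG z p, hpow]

lemma div_pos_of_mul_pos {a b : ℝ} (h : 0 < a * b) : 0 < a / b := by
  rcases mul_pos_iff.mp h with ⟨h1, h2⟩ | ⟨h1, h2⟩
  · exact div_pos h1 h2
  · exact div_pos_of_neg_of_neg h1 h2

lemma negOneSq (k : ℕ) : ((-1:ℝ))^k * (-1:ℝ)^k = 1 := by
  rw [← pow_add]
  exact Even.neg_one_pow ⟨k, rfl⟩

open Polynomial in
lemma polyPart (b : ℝ) (hb : 0 < b) (N₁ N₂ n : ℕ) (γ₁ γ₂ : ℝ) :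
    ∃ p : Polynomial ℝ, p.degree = (2 * n : ℕ) ∧ ∀ x : ℝ,
      (∑ j ∈ Finset.range (n + 1),
      (-1 : ℝ) ^ j * (n.choose j : ℝ) * (-b) ^ (-(j : ℤ)) *
        (∏ i ∈ Finset.range j, ((x - γ₁ - (i : ℝ)) * (x - γ₂ - (i : ℝ)))) *
        ∏ i ∈ Finset.range (n - j),
          (((N₁ : ℝ) - x + γ₁ - (i : ℝ)) * ((N₂ : ℝ) - x + γ₂ - (i : ℝ)))) = p.eval x := by
  set Q : ℕ → ℝ[X] := fun j =>
    (∏ i ∈ Finset.range j, ((X - C (γ₁ + i)) * (X - C (γ₂ + i)))) *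
    (∏ i ∈ Finset.range (n - j), ((X - C ((N₁:ℝ) + γ₁ - i)) * (X - C ((N₂:ℝ) + γ₂ - i)))) with hQ
  have hmono : ∀ j, j ≤ n → (Q j).Monic ∧ (Q j).natDegree = 2 * n := by
    intro j hj
    have m1 : (∏ i ∈ Finset.range j, ((X - C (γ₁ + (i:ℝ))) * (X - C (γ₂ + i)))).Monic :=
      Polynomial.monic_prod_of_monic _ _ fun i _ => (monic_X_sub_C _).mul (monic_X_sub_C _)
    have m2 : (∏ i ∈ Finset.range (n-j), ((X - C ((N₁:ℝ) + γ₁ - i)) * (X - C ((N₂:ℝ) + γ₂ - i)))).Monic :=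
      Polynomial.monic_prod_of_monic _ _ fun i _ => (monic_X_sub_C _).mul (monic_X_sub_C _)
    refine ⟨m1.mul m2, ?_⟩
    rw [hQ]
    have d1 : (∏ i ∈ Finset.range j, ((X - C (γ₁ + (i:ℝ))) * (X - C (γ₂ + i)))).natDegree = 2 * j := by
      rw [Polynomial.natDegree_prod_of_monic _ _ fun i _ => (monic_X_sub_C _).mul (monic_X_sub_C _)]
      have : ∀ i ∈ Finset.range j, ((X - C (γ₁ + (i:ℝ))) * (X - C (γ₂ + i))).natDegree = 2 := by
        intro i _
        rw [Polynomial.natDegree_mul (X_sub_C_ne_zero _) (X_sub_C_ne_zero _), natDegree_X_sub_C, natDegree_X_sub_C]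
      rw [Finset.sum_congr rfl this, Finset.sum_const, Finset.card_range]; ring
    have d2 : (∏ i ∈ Finset.range (n-j), ((X - C ((N₁:ℝ) + γ₁ - i)) * (X - C ((N₂:ℝ) + γ₂ - i)))).natDegree = 2 * (n - j) := by
      rw [Polynomial.natDegree_prod_of_monic _ _ fun i _ => (monic_X_sub_C _).mul (monic_X_sub_C _)]
      have : ∀ i ∈ Finset.range (n-j), ((X - C ((N₁:ℝ) + γ₁ - (i:ℝ))) * (X - C ((N₂:ℝ) + γ₂ - i))).natDegree = 2 := by
        intro i _
        rw [Polynomial.natDegree_mul (X_sub_C_ne_zero _) (X_sub_C_ne_zero _), natDegree_X_sub_C, natDegree_X_sub_C]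
      rw [Finset.sum_congr rfl this, Finset.sum_const, Finset.card_range]; ring
    rw [Polynomial.natDegree_mul m1.ne_zero m2.ne_zero, d1, d2]
    omega
  set p : ℝ[X] := ∑ j ∈ Finset.range (n+1),
      C ((-1:ℝ)^j * (n.choose j : ℝ) * (-b) ^ (-(j:ℤ))) * Q j with hp
  have hcoeff : p.coeff (2*n) = ∑ j ∈ Finset.range (n+1), (-1:ℝ)^j * (n.choose j : ℝ) * (-b) ^ (-(j:ℤ)) := by
    rw [hp, Polynomial.finset_sum_coeff]
    refine Finset.sum_congr rfl fun j hj => ?_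
    have hj' := Finset.mem_range.mp hj
    obtain ⟨hm, hd⟩ := hmono j (by omega)
    rw [Polynomial.coeff_C_mul, ← hd, hm.coeff_natDegree, mul_one]
  have hpos : 0 < p.coeff (2*n) := by
    rw [hcoeff]
    have : ∀ j ∈ Finset.range (n+1), (-1:ℝ)^j * (n.choose j : ℝ) * (-b) ^ (-(j:ℤ)) = (n.choose j : ℝ) * (b⁻¹)^j := by
      intro j _
      rw [zpow_neg, zpow_natCast, neg_pow b j, mul_inv, ← inv_pow]
      have h2 : ((-1:ℝ))⁻¹ ^ j = (-1:ℝ)^j := by norm_num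
      have h3 : (-1:ℝ)^j * (-1:ℝ)^j = 1 := by
        rw [← pow_add]
        exact Even.neg_one_pow ⟨j, rfl⟩
      calc (-1:ℝ)^j * (n.choose j : ℝ) * (((-1:ℝ))⁻¹^j * (b^j)⁻¹)
          = ((-1:ℝ)^j * (-1:ℝ)^j) * ((n.choose j : ℝ) * (b^j)⁻¹) := by rw [h2]; ring
        _ = (n.choose j : ℝ) * (b⁻¹)^j := by rw [h3, inv_pow]; ring
    rw [Finset.sum_congr rfl this]
    apply Finset.sum_pos'
    · intro j _; positivity
    · exact ⟨0, Finset.mem_range.mpr (by omega), by simp⟩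
  have hle : p.natDegree ≤ 2*n := by
    apply Polynomial.natDegree_sum_le_of_forall_le
    intro j hj
    have hj' := Finset.mem_range.mp hj
    obtain ⟨hm, hd⟩ := hmono j (by omega)
    calc (C ((-1:ℝ)^j * (n.choose j : ℝ) * (-b) ^ (-(j:ℤ))) * Q j).natDegree
        ≤ (C ((-1:ℝ)^j * (n.choose j : ℝ) * (-b) ^ (-(j:ℤ)))).natDegree + (Q j).natDegree := Polynomial.natDegree_mul_le
      _ ≤ 2*n := by rw [Polynomial.natDegree_C, hd]; omega
  refine ⟨p, ?_, ?_⟩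
  · have hne : p ≠ 0 := fun h => by simp [h] at hpos
    have h2n : 2*n ≤ p.natDegree := Polynomial.le_natDegree_of_ne_zero hpos.ne'
    have hnat : p.natDegree = 2*n := le_antisymm hle h2n
    rw [Polynomial.degree_eq_natDegree hne, hnat]
  · intro x
    rw [hp]
    rw [Polynomial.eval_finset_sum]
    refine Finset.sum_congr rfl fun j hj => ?_
    rw [hQ]
    simp only [Polynomial.eval_mul, Polynomial.eval_C, Polynomial.eval_prod, Polynomial.eval_sub, Polynomial.eval_X]
    have e1 : (∏ i ∈ Finset.range j, ((x - γ₁ - (i:ℝ)) * (x - γ₂ - i)))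
        = ∏ i ∈ Finset.range j, ((x - (γ₁ + (i:ℝ))) * (x - (γ₂ + i))) :=
      Finset.prod_congr rfl fun i _ => by ring
    have e2 : (∏ i ∈ Finset.range (n-j), (((N₁:ℝ) - x + γ₁ - (i:ℝ)) * ((N₂:ℝ) - x + γ₂ - i)))
        = ∏ i ∈ Finset.range (n-j), ((x - ((N₁:ℝ) + γ₁ - (i:ℝ))) * (x - ((N₂:ℝ) + γ₂ - i))) :=
      Finset.prod_congr rfl fun i _ => by ring
    rw [e1, e2]
    ring

/-- The paper's Angelesco–Kravchuk family (Case II, disjoint supports): the weights `W_j`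
on the shifted lattices `γ_j + {0,…,N_j}` have constant sign, the Rodrigues polynomial
`P` has degree exactly `2n`, and `P` is orthogonal to `x^k`, `k < n`, with respect to
both discrete measures. -/
theorem stmt_16 (b : ℝ) (hb : 0 < b) (N₁ N₂ n : ℕ) (hnN : n ≤ min N₁ N₂) (γ₁ γ₂ : ℝ)
    (hγN : γ₁ - γ₂ > N₂) (hγZ : ∀ z : ℤ, γ₁ - γ₂ ≠ (z : ℝ)) (W₁ W₂ : ℕ → ℝ)
    (hW₁ : ∀ m : ℕ, m ≤ N₁ → W₁ m = (-b) ^ m /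
      ((m.factorial : ℝ) * ((N₁ - m).factorial : ℝ) *
        Real.Gamma ((m : ℝ) + γ₁ - γ₂ + 1) * Real.Gamma ((N₂ : ℝ) - m - γ₁ + γ₂ + 1)))
    (hW₂ : ∀ m : ℕ, m ≤ N₂ → W₂ m = (-b) ^ m /
      (Real.Gamma ((m : ℝ) + γ₂ - γ₁ + 1) * Real.Gamma ((N₁ : ℝ) - m + γ₁ - γ₂ + 1) *
        (m.factorial : ℝ) * ((N₂ - m).factorial : ℝ)))
    (P : ℝ → ℝ)
    (hP : ∀ x : ℝ, P x = ∑ j ∈ Finset.range (n + 1),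
      (-1 : ℝ) ^ j * (n.choose j : ℝ) * (-b) ^ (-(j : ℤ)) *
        (∏ i ∈ Finset.range j, ((x - γ₁ - (i : ℝ)) * (x - γ₂ - (i : ℝ)))) *
        ∏ i ∈ Finset.range (n - j),
          (((N₁ : ℝ) - x + γ₁ - (i : ℝ)) * ((N₂ : ℝ) - x + γ₂ - (i : ℝ)))) :
    (∀ m m' : ℕ, m ≤ N₁ → m' ≤ N₁ → 0 < W₁ m * W₁ m') ∧
    (∀ m m' : ℕ, m ≤ N₂ → m' ≤ N₂ → 0 < W₂ m * W₂ m') ∧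
    (∃ p : Polynomial ℝ, p.degree = (2 * n : ℕ) ∧ ∀ x : ℝ, P x = p.eval x) ∧
    (∀ k : ℕ, k < n →
      ∑ m ∈ Finset.range (N₁ + 1), P (γ₁ + m) * (γ₁ + m) ^ k * W₁ m = 0 ∧
      ∑ m ∈ Finset.range (N₂ + 1), P (γ₂ + m) * (γ₂ + m) ^ k * W₂ m = 0) := by
  have hb0 : b ≠ 0 := ne_of_gt hb
  have hn1 : n ≤ N₁ := le_trans hnN (min_le_left _ _)
  have hn2 : n ≤ N₂ := le_trans hnN (min_le_right _ _)
  have hN2R : (0:ℝ) ≤ N₂ := Nat.cast_nonneg _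
  -- the negative-argument Gamma base point
  have ha : (N₂:ℝ) - (γ₁ - γ₂) + 1 < 1 := by linarith
  have hz' : ∀ z : ℤ, (N₂:ℝ) - (γ₁ - γ₂) + 1 ≠ z := by
    intro z h
    apply hγZ ((N₂:ℤ) + 1 - z)
    push_cast
    linarith
  have key₁ : ∀ u u' : ℕ,
      0 < ((-1:ℝ)^u * Real.Gamma ((N₂:ℝ) - (γ₁ - γ₂) + 1 - u)) *
          ((-1:ℝ)^u' * Real.Gamma ((N₂:ℝ) - (γ₁ - γ₂) + 1 - u')) := by
    intro u u'
    have hA := gammaSign _ ha hz' u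
    have hA' := gammaSign _ ha hz' u'
    have hg2 : 0 < Real.Gamma ((N₂:ℝ) - (γ₁ - γ₂) + 1) * Real.Gamma ((N₂:ℝ) - (γ₁ - γ₂) + 1) :=
      mul_self_pos.mpr (gammaNZ _ hz')
    nlinarith [mul_pos hA hA']
  -- Part 1
  have part1 : ∀ m m' : ℕ, m ≤ N₁ → m' ≤ N₁ → 0 < W₁ m * W₁ m' := by
    have hck₁ : ∀ mm : ℕ, mm ≤ N₁ → W₁ mm = (-b)^mm /
        (((mm.factorial:ℝ) * ((N₁-mm).factorial:ℝ) * Real.Gamma ((mm:ℝ)+γ₁-γ₂+1)) *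
          Real.Gamma ((N₂:ℝ) - (γ₁ - γ₂) + 1 - mm)) := by
      intro mm hmm
      rw [hW₁ mm hmm]
      have e : Real.Gamma ((N₂:ℝ) - mm - γ₁ + γ₂ + 1) = Real.Gamma ((N₂:ℝ) - (γ₁ - γ₂) + 1 - mm) := by
        congr 1; ring
      rw [e]
    have hp₁ : ∀ mm : ℕ, 0 < (mm.factorial:ℝ) * ((N₁-mm).factorial:ℝ) * Real.Gamma ((mm:ℝ)+γ₁-γ₂+1) := by
      intro mm
      have f1 : (0:ℝ) < mm.factorial := by exact_mod_cast mm.factorial_pos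
      have f2 : (0:ℝ) < (N₁-mm).factorial := by exact_mod_cast (N₁-mm).factorial_pos
      have f3 : 0 < Real.Gamma ((mm:ℝ)+γ₁-γ₂+1) := by
        apply Real.Gamma_pos_of_pos
        have : (0:ℝ) ≤ mm := Nat.cast_nonneg _
        linarith
      exact mul_pos (mul_pos f1 f2) f3
    intro m m' hm hm'
    rw [hck₁ m hm, hck₁ m' hm', div_mul_div_comm]
    apply div_pos_of_mul_pos
    have e1 : (-b:ℝ)^m = (-1:ℝ)^m * b^m := by rw [neg_pow]
    have e2 : (-b:ℝ)^m' = (-1:ℝ)^m' * b^m' := by rw [neg_pow]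
    rw [e1, e2]
    refine lt_of_lt_of_eq (mul_pos (mul_pos (mul_pos (mul_pos (pow_pos hb m) (pow_pos hb m'))
      (hp₁ m)) (hp₁ m')) (key₁ m m')) ?_
    ring
  -- Part 2
  have part2 : ∀ m m' : ℕ, m ≤ N₂ → m' ≤ N₂ → 0 < W₂ m * W₂ m' := by
    have hck₂ : ∀ mm : ℕ, mm ≤ N₂ → W₂ mm = (-b)^mm /
        ((Real.Gamma ((N₁:ℝ)-mm+γ₁-γ₂+1) * (mm.factorial:ℝ) * ((N₂-mm).factorial:ℝ)) *
          Real.Gamma ((N₂:ℝ) - (γ₁ - γ₂) + 1 - ((N₂ - mm : ℕ) : ℝ))) := by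
      intro mm hmm
      rw [hW₂ mm hmm]
      have e : Real.Gamma ((mm:ℝ)+γ₂-γ₁+1) = Real.Gamma ((N₂:ℝ) - (γ₁ - γ₂) + 1 - ((N₂ - mm : ℕ) : ℝ)) := by
        congr 1
        push_cast [Nat.cast_sub hmm]
        ring
      rw [e]
      congr 1
      ring
    have hp₂ : ∀ mm : ℕ, mm ≤ N₂ →
        0 < Real.Gamma ((N₁:ℝ)-mm+γ₁-γ₂+1) * (mm.factorial:ℝ) * ((N₂-mm).factorial:ℝ) := by
      intro mm hmm
      have f1 : (0:ℝ) < mm.factorial := by exact_mod_cast mm.factorial_pos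
      have f2 : (0:ℝ) < (N₂-mm).factorial := by exact_mod_cast (N₂-mm).factorial_pos
      have f3 : 0 < Real.Gamma ((N₁:ℝ)-mm+γ₁-γ₂+1) := by
        apply Real.Gamma_pos_of_pos
        have h1 : (mm:ℝ) ≤ N₂ := by exact_mod_cast hmm
        have h2 : (0:ℝ) ≤ N₁ := Nat.cast_nonneg _
        linarith
      exact mul_pos (mul_pos f3 f1) f2
    have key₂ : ∀ mm mm' : ℕ, mm ≤ N₂ → mm' ≤ N₂ →
        0 < ((-1:ℝ)^mm * Real.Gamma ((N₂:ℝ) - (γ₁ - γ₂) + 1 - ((N₂ - mm : ℕ) : ℝ))) *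
            ((-1:ℝ)^mm' * Real.Gamma ((N₂:ℝ) - (γ₁ - γ₂) + 1 - ((N₂ - mm' : ℕ) : ℝ))) := by
      intro mm mm' hmm hmm'
      have hx : ∀ t : ℕ, t ≤ N₂ → ((-1:ℝ))^t = (-1:ℝ)^(N₂:ℕ) * (-1:ℝ)^(N₂-t) := by
        intro t ht
        have hadd : ((-1:ℝ))^t * (-1:ℝ)^(N₂-t) = (-1:ℝ)^(N₂:ℕ) := by
          rw [← pow_add]; congr 1; omega
        calc ((-1:ℝ))^t = (-1:ℝ)^t * ((-1:ℝ)^(N₂-t) * (-1:ℝ)^(N₂-t)) := by rw [negOneSq]; ring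
          _ = ((-1:ℝ)^t * (-1:ℝ)^(N₂-t)) * (-1:ℝ)^(N₂-t) := by ring
          _ = (-1:ℝ)^(N₂:ℕ) * (-1:ℝ)^(N₂-t) := by rw [hadd]
      rw [hx mm hmm, hx mm' hmm']
      have e : ((-1:ℝ)^(N₂:ℕ) * (-1:ℝ)^(N₂-mm) * Real.Gamma ((N₂:ℝ) - (γ₁ - γ₂) + 1 - ((N₂ - mm : ℕ) : ℝ))) *
          ((-1:ℝ)^(N₂:ℕ) * (-1:ℝ)^(N₂-mm') * Real.Gamma ((N₂:ℝ) - (γ₁ - γ₂) + 1 - ((N₂ - mm' : ℕ) : ℝ)))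
        = ((-1:ℝ)^(N₂:ℕ) * (-1:ℝ)^(N₂:ℕ)) *
          (((-1:ℝ)^(N₂-mm) * Real.Gamma ((N₂:ℝ) - (γ₁ - γ₂) + 1 - ((N₂ - mm : ℕ) : ℝ))) *
           ((-1:ℝ)^(N₂-mm') * Real.Gamma ((N₂:ℝ) - (γ₁ - γ₂) + 1 - ((N₂ - mm' : ℕ) : ℝ)))) := by ring
      rw [e, negOneSq, one_mul]
      exact key₁ (N₂-mm) (N₂-mm')
    intro m m' hm hm'
    rw [hck₂ m hm, hck₂ m' hm', div_mul_div_comm]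
    apply div_pos_of_mul_pos
    have e1 : (-b:ℝ)^m = (-1:ℝ)^m * b^m := by rw [neg_pow]
    have e2 : (-b:ℝ)^m' = (-1:ℝ)^m' * b^m' := by rw [neg_pow]
    rw [e1, e2]
    refine lt_of_lt_of_eq (mul_pos (mul_pos (mul_pos (mul_pos (pow_pos hb m) (pow_pos hb m'))
      (hp₂ m hm)) (hp₂ m' hm')) (key₂ m m' hm hm')) ?_
    ring
  refine ⟨part1, part2, ?_, ?_⟩
  · obtain ⟨p, hdeg, hev⟩ := polyPart b hb N₁ N₂ n γ₁ γ₂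
    exact ⟨p, hdeg, fun x => by rw [hP x]; exact hev x⟩
  -- Part 4: orthogonality
  intro k hk
  constructor
  · -- lattice 1
    set F₁ : ℤ → ℝ := fun ℓ => (-b)^ℓ *
        ((Real.Gamma ((ℓ:ℝ)+1))⁻¹ * (Real.Gamma ((ℓ:ℝ)+(γ₁-γ₂)+1))⁻¹ *
         (Real.Gamma ((N₁:ℝ)-(n:ℝ)-(ℓ:ℝ)+1))⁻¹ * (Real.Gamma ((N₂:ℝ)-(n:ℝ)-(ℓ:ℝ)-(γ₁-γ₂)+1))⁻¹) with hF₁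
    have hF₁0 : ∀ ℓ : ℤ, ℓ < 0 → F₁ ℓ = 0 := by
      intro ℓ hℓ
      have hg : Real.Gamma ((ℓ:ℝ)+1) = 0 := by
        rw [Real.Gamma_eq_zero_iff]
        refine ⟨(-(ℓ+1)).toNat, ?_⟩
        have hzz : ((ℓ:ℤ)+1 : ℤ) = -((-(ℓ+1)).toNat : ℤ) := by omega
        have hzr : (ℓ:ℝ)+1 = -((((-(ℓ+1)).toNat : ℕ)) : ℝ) := by exact_mod_cast hzz
        linarith [hzr]
      simp [hF₁, hg]
    have hF₁1 : ∀ ℓ : ℤ, (N₁:ℤ) - (n:ℤ) < ℓ → F₁ ℓ = 0 := by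
      intro ℓ hℓ
      have hg : Real.Gamma ((N₁:ℝ)-(n:ℝ)-(ℓ:ℝ)+1) = 0 := by
        rw [Real.Gamma_eq_zero_iff]
        refine ⟨(ℓ - (N₁:ℤ) + n - 1).toNat, ?_⟩
        have hzz : ((N₁:ℤ) - n - ℓ + 1 : ℤ) = -((ℓ - (N₁:ℤ) + n - 1).toNat : ℤ) := by omega
        have hzr : (N₁:ℝ) - n - ℓ + 1 = -(((ℓ - (N₁:ℤ) + n - 1).toNat : ℕ) : ℝ) := by exact_mod_cast hzz
        linarith [hzr]
      simp [hF₁, hg]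
    have hPW₁ : ∀ m : ℕ, m ≤ N₁ → P (γ₁ + m) * W₁ m
        = ∑ j ∈ Finset.range (n+1), (-1:ℝ)^j * (n.choose j) * F₁ ((m:ℤ) - j) := by
      intro m hm
      rw [hP, hW₁ m hm, Finset.sum_mul]
      refine Finset.sum_congr rfl fun j hj => ?_
      have hj' : j ≤ n := by have := Finset.mem_range.mp hj; omega
      have hprod1 : (∏ i ∈ Finset.range j, ((γ₁ + (m:ℝ) - γ₁ - i) * (γ₁ + m - γ₂ - i)))
          = ∏ i ∈ Finset.range j, (((m:ℝ) - i) * (((m:ℝ) + (γ₁ - γ₂)) - i)) :=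
        Finset.prod_congr rfl fun i _ => by ring
      have hprod2 : (∏ i ∈ Finset.range (n-j), (((N₁:ℝ) - (γ₁ + m) + γ₁ - i) * ((N₂:ℝ) - (γ₁ + m) + γ₂ - i)))
          = ∏ i ∈ Finset.range (n-j), ((((N₁:ℝ) - m) - i) * (((N₂:ℝ) - m - (γ₁ - γ₂)) - i)) :=
        Finset.prod_congr rfl fun i _ => by ring
      have hD : ((m.factorial:ℝ) * ((N₁-m).factorial:ℝ) * Real.Gamma ((m:ℝ)+γ₁-γ₂+1) * Real.Gamma ((N₂:ℝ)-m-γ₁+γ₂+1))⁻¹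
          = (Real.Gamma ((m:ℝ)+1))⁻¹ * (Real.Gamma (((m:ℝ)+(γ₁-γ₂))+1))⁻¹ *
            (Real.Gamma (((N₁:ℝ)-m)+1))⁻¹ * (Real.Gamma (((N₂:ℝ)-m-(γ₁-γ₂))+1))⁻¹ := by
        have f1 : (m.factorial:ℝ) = Real.Gamma ((m:ℝ)+1) := (Real.Gamma_nat_eq_factorial m).symm
        have f2 : ((N₁-m).factorial:ℝ) = Real.Gamma (((N₁:ℝ)-m)+1) := by
          rw [← Real.Gamma_nat_eq_factorial (N₁-m)]
          congr 1
          push_cast [Nat.cast_sub hm]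
          ring
        have f3 : Real.Gamma ((m:ℝ)+γ₁-γ₂+1) = Real.Gamma (((m:ℝ)+(γ₁-γ₂))+1) := by congr 1; ring
        have f4 : Real.Gamma ((N₂:ℝ)-m-γ₁+γ₂+1) = Real.Gamma (((N₂:ℝ)-m-(γ₁-γ₂))+1) := by congr 1; ring
        rw [f1, f2, f3, f4, mul_inv, mul_inv, mul_inv]
        ring
      rw [div_eq_mul_inv, hD, hprod1, hprod2]
      have main := termEq b ((m:ℝ)) ((m:ℝ)+(γ₁-γ₂)) ((N₁:ℝ)-m) ((N₂:ℝ)-m-(γ₁-γ₂)) hb0 j (n-j) m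
      have c0 : (((m:ℤ)-(j:ℤ) : ℤ) : ℝ) = (m:ℝ) - j := by push_cast; ring
      have g2 : Real.Gamma ((m:ℝ)-(j:ℝ)+(γ₁-γ₂)+1) = Real.Gamma ((m:ℝ)+(γ₁-γ₂)-(j:ℝ)+1) := by
        congr 1; ring
      have g3 : Real.Gamma ((N₁:ℝ)-(n:ℝ)-((m:ℝ)-(j:ℝ))+1) = Real.Gamma ((N₁:ℝ)-(m:ℝ)-((n-j:ℕ):ℝ)+1) := by
        congr 1; push_cast [Nat.cast_sub hj']; ring
      have g4 : Real.Gamma ((N₂:ℝ)-(n:ℝ)-((m:ℝ)-(j:ℝ))-(γ₁-γ₂)+1) = Real.Gamma ((N₂:ℝ)-(m:ℝ)-(γ₁-γ₂)-((n-j:ℕ):ℝ)+1) := by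
        congr 1; push_cast [Nat.cast_sub hj']; ring
      have hF : F₁ ((m:ℤ)-(j:ℤ)) = (-b)^((m:ℤ)-j) *
          ((Real.Gamma ((m:ℝ)-(j:ℝ)+1))⁻¹ * (Real.Gamma ((m:ℝ)+(γ₁-γ₂)-(j:ℝ)+1))⁻¹ *
           (Real.Gamma ((N₁:ℝ)-(m:ℝ)-((n-j:ℕ):ℝ)+1))⁻¹ * (Real.Gamma ((N₂:ℝ)-(m:ℝ)-(γ₁-γ₂)-((n-j:ℕ):ℝ)+1))⁻¹) := by
        rw [hF₁]
        simp only []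
        rw [c0, g2, g3, g4]
      rw [hF]
      linear_combination ((-1:ℝ)^j * (n.choose j : ℝ)) * main
    have hq₁ : ∀ ℓ : ℕ, ∑ j ∈ Finset.range (n+1), (-1:ℝ)^j * (n.choose j) * (γ₁ + ((ℓ+j : ℕ) : ℝ))^k = 0 := by
      intro ℓ
      refine Eq.trans (Finset.sum_congr rfl fun j _ => ?_) (diffPow n k hk (γ₁ + ℓ))
      push_cast
      ring
    have hswap := swapLem F₁ (fun mm => (γ₁ + (mm:ℝ))^k) N₁ n hn1 hF₁0 hF₁1 hq₁
    calc ∑ m ∈ Finset.range (N₁ + 1), P (γ₁ + m) * (γ₁ + m) ^ k * W₁ m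
        = ∑ m ∈ Finset.range (N₁ + 1), (γ₁ + (m:ℝ))^k *
            ∑ j ∈ Finset.range (n+1), (-1:ℝ)^j * (n.choose j) * F₁ ((m:ℤ) - j) := by
          refine Finset.sum_congr rfl fun m hm => ?_
          have hm' : m ≤ N₁ := by have := Finset.mem_range.mp hm; omega
          rw [← hPW₁ m hm']
          ring
      _ = 0 := hswap
  · -- lattice 2
    set F₂ : ℤ → ℝ := fun ℓ => (-b)^ℓ *
        ((Real.Gamma ((ℓ:ℝ)-(γ₁-γ₂)+1))⁻¹ * (Real.Gamma ((ℓ:ℝ)+1))⁻¹ *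
         (Real.Gamma ((N₁:ℝ)-(n:ℝ)-(ℓ:ℝ)+(γ₁-γ₂)+1))⁻¹ * (Real.Gamma ((N₂:ℝ)-(n:ℝ)-(ℓ:ℝ)+1))⁻¹) with hF₂
    have hF₂0 : ∀ ℓ : ℤ, ℓ < 0 → F₂ ℓ = 0 := by
      intro ℓ hℓ
      have hg : Real.Gamma ((ℓ:ℝ)+1) = 0 := by
        rw [Real.Gamma_eq_zero_iff]
        refine ⟨(-(ℓ+1)).toNat, ?_⟩
        have hzz : ((ℓ:ℤ)+1 : ℤ) = -((-(ℓ+1)).toNat : ℤ) := by omega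
        have hzr : (ℓ:ℝ)+1 = -((((-(ℓ+1)).toNat : ℕ)) : ℝ) := by exact_mod_cast hzz
        linarith [hzr]
      simp [hF₂, hg]
    have hF₂1 : ∀ ℓ : ℤ, (N₂:ℤ) - (n:ℤ) < ℓ → F₂ ℓ = 0 := by
      intro ℓ hℓ
      have hg : Real.Gamma ((N₂:ℝ)-(n:ℝ)-(ℓ:ℝ)+1) = 0 := by
        rw [Real.Gamma_eq_zero_iff]
        refine ⟨(ℓ - (N₂:ℤ) + n - 1).toNat, ?_⟩
        have hzz : ((N₂:ℤ) - n - ℓ + 1 : ℤ) = -((ℓ - (N₂:ℤ) + n - 1).toNat : ℤ) := by omega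
        have hzr : (N₂:ℝ) - n - ℓ + 1 = -(((ℓ - (N₂:ℤ) + n - 1).toNat : ℕ) : ℝ) := by exact_mod_cast hzz
        linarith [hzr]
      simp [hF₂, hg]
    have hPW₂ : ∀ m : ℕ, m ≤ N₂ → P (γ₂ + m) * W₂ m
        = ∑ j ∈ Finset.range (n+1), (-1:ℝ)^j * (n.choose j) * F₂ ((m:ℤ) - j) := by
      intro m hm
      rw [hP, hW₂ m hm, Finset.sum_mul]
      refine Finset.sum_congr rfl fun j hj => ?_
      have hj' : j ≤ n := by have := Finset.mem_range.mp hj; omega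
      have hprod1 : (∏ i ∈ Finset.range j, ((γ₂ + (m:ℝ) - γ₁ - i) * (γ₂ + m - γ₂ - i)))
          = ∏ i ∈ Finset.range j, ((((m:ℝ) - (γ₁ - γ₂)) - i) * (((m:ℝ)) - i)) :=
        Finset.prod_congr rfl fun i _ => by ring
      have hprod2 : (∏ i ∈ Finset.range (n-j), (((N₁:ℝ) - (γ₂ + m) + γ₁ - i) * ((N₂:ℝ) - (γ₂ + m) + γ₂ - i)))
          = ∏ i ∈ Finset.range (n-j), ((((N₁:ℝ) - m + (γ₁ - γ₂)) - i) * (((N₂:ℝ) - m) - i)) :=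
        Finset.prod_congr rfl fun i _ => by ring
      have hD : (Real.Gamma ((m:ℝ)+γ₂-γ₁+1) * Real.Gamma ((N₁:ℝ)-m+γ₁-γ₂+1) * (m.factorial:ℝ) * ((N₂-m).factorial:ℝ))⁻¹
          = (Real.Gamma (((m:ℝ)-(γ₁-γ₂))+1))⁻¹ * (Real.Gamma ((m:ℝ)+1))⁻¹ *
            (Real.Gamma (((N₁:ℝ)-m+(γ₁-γ₂))+1))⁻¹ * (Real.Gamma (((N₂:ℝ)-m)+1))⁻¹ := by
        have f1 : (m.factorial:ℝ) = Real.Gamma ((m:ℝ)+1) := (Real.Gamma_nat_eq_factorial m).symm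
        have f2 : ((N₂-m).factorial:ℝ) = Real.Gamma (((N₂:ℝ)-m)+1) := by
          rw [← Real.Gamma_nat_eq_factorial (N₂-m)]
          congr 1
          push_cast [Nat.cast_sub hm]
          ring
        have f3 : Real.Gamma ((m:ℝ)+γ₂-γ₁+1) = Real.Gamma (((m:ℝ)-(γ₁-γ₂))+1) := by congr 1; ring
        have f4 : Real.Gamma ((N₁:ℝ)-m+γ₁-γ₂+1) = Real.Gamma (((N₁:ℝ)-m+(γ₁-γ₂))+1) := by congr 1; ring
        rw [f1, f2, f3, f4, mul_inv, mul_inv, mul_inv]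
        ring
      rw [div_eq_mul_inv, hD, hprod1, hprod2]
      have main := termEq b ((m:ℝ)-(γ₁-γ₂)) ((m:ℝ)) ((N₁:ℝ)-m+(γ₁-γ₂)) ((N₂:ℝ)-m) hb0 j (n-j) m
      have c0 : (((m:ℤ)-(j:ℤ) : ℤ) : ℝ) = (m:ℝ) - j := by push_cast; ring
      have g2 : Real.Gamma ((m:ℝ)-(j:ℝ)-(γ₁-γ₂)+1) = Real.Gamma ((m:ℝ)-(γ₁-γ₂)-(j:ℝ)+1) := by
        congr 1; ring
      have g3 : Real.Gamma ((N₁:ℝ)-(n:ℝ)-((m:ℝ)-(j:ℝ))+(γ₁-γ₂)+1) = Real.Gamma ((N₁:ℝ)-(m:ℝ)+(γ₁-γ₂)-((n-j:ℕ):ℝ)+1) := by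
        congr 1; push_cast [Nat.cast_sub hj']; ring
      have g4 : Real.Gamma ((N₂:ℝ)-(n:ℝ)-((m:ℝ)-(j:ℝ))+1) = Real.Gamma ((N₂:ℝ)-(m:ℝ)-((n-j:ℕ):ℝ)+1) := by
        congr 1; push_cast [Nat.cast_sub hj']; ring
      have hF : F₂ ((m:ℤ)-(j:ℤ)) = (-b)^((m:ℤ)-j) *
          ((Real.Gamma ((m:ℝ)-(γ₁-γ₂)-(j:ℝ)+1))⁻¹ * (Real.Gamma ((m:ℝ)-(j:ℝ)+1))⁻¹ *
           (Real.Gamma ((N₁:ℝ)-(m:ℝ)+(γ₁-γ₂)-((n-j:ℕ):ℝ)+1))⁻¹ * (Real.Gamma ((N₂:ℝ)-(m:ℝ)-((n-j:ℕ):ℝ)+1))⁻¹) := by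
        rw [hF₂]
        simp only []
        rw [c0, g2, g3, g4]
      rw [hF]
      linear_combination ((-1:ℝ)^j * (n.choose j : ℝ)) * main
    have hq₂ : ∀ ℓ : ℕ, ∑ j ∈ Finset.range (n+1), (-1:ℝ)^j * (n.choose j) * (γ₂ + ((ℓ+j : ℕ) : ℝ))^k = 0 := by
      intro ℓ
      refine Eq.trans (Finset.sum_congr rfl fun j _ => ?_) (diffPow n k hk (γ₂ + ℓ))
      push_cast
      ring
    have hswap := swapLem F₂ (fun mm => (γ₂ + (mm:ℝ))^k) N₂ n hn2 hF₂0 hF₂1 hq₂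
    calc ∑ m ∈ Finset.range (N₂ + 1), P (γ₂ + m) * (γ₂ + m) ^ k * W₂ m
        = ∑ m ∈ Finset.range (N₂ + 1), (γ₂ + (m:ℝ))^k *
            ∑ j ∈ Finset.range (n+1), (-1:ℝ)^j * (n.choose j) * F₂ ((m:ℤ) - j) := by
          refine Finset.sum_congr rfl fun m hm => ?_
          have hm' : m ≤ N₂ := by have := Finset.mem_range.mp hm; omega
          rw [← hPW₂ m hm']
          ring
      _ = 0 := hswap
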